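/- Let L, M, R be positive integers, Φ ∈ ℂ^{L×M}, Ψ ∈ ℂ^{R×M}, λ_1,…,λ_M ∈ ℝ, and T ≥ 0. Define G(θ) = Φ · diag(exp(−(θ−λ_m)²T²))_{m∈[M]} · Ψᴴ ∈ ℂ^{L×R}. Then for all θ, θ' ∈ ℝ: ‖G(θ) − G(θ')‖_F ≤ T·|θ − θ'| · Σ_{m∈[M]} ‖Φ_{:,m}‖ · ‖Ψ_{:,m}‖. -/

import Mathlib

open Matrix

/-- Frobenius norm of a complex matrix. -/
noncomputable def frob {m n : Type*} [Fintype m] [Fintype n] (A : Matrix m n ℂ) : ℝ :=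
  Real.sqrt (∑ i, ∑ j, ‖A i j‖ ^ 2)

/-- Euclidean norm of the `m`-th column of a matrix. -/
noncomputable def colNorm {l m : Type*} [Fintype l] (A : Matrix l m ℂ) (j : m) : ℝ :=
  Real.sqrt (∑ i, ‖A i j‖ ^ 2)

attribute [local instance] Matrix.frobeniusSeminormedAddCommGroup Matrix.frobeniusNormedSpace

lemma frob_eq_norm {m n : Type*} [Fintype m] [Fintype n] (A : Matrix m n ℂ) :
    frob A = ‖A‖ := by
  rw [Matrix.frobenius_norm_def, frob, Real.sqrt_eq_rpow]
  norm_num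

lemma gauss_lip (x y : ℝ) : |Real.exp (-x ^ 2) - Real.exp (-y ^ 2)| ≤ |x - y| := by
  have key : ∀ z : ℝ, ‖deriv (fun t : ℝ => Real.exp (-t ^ 2)) z‖ ≤ 1 := by
    intro z
    have hd : deriv (fun t : ℝ => Real.exp (-t ^ 2)) z =
        Real.exp (-z ^ 2) * (-(2 * z)) := by
      have h1 : HasDerivAt (fun t : ℝ => -t ^ 2) (-(2 * z)) z := by
        simpa using ((hasDerivAt_pow 2 z).fun_neg)
      simpa using (h1.exp.deriv)
    rw [hd]
    have h2 : Real.exp (-z ^ 2) ≤ (1 + z ^ 2)⁻¹ := by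
      rw [Real.exp_neg]
      apply inv_anti₀ (by positivity)
      have := Real.add_one_le_exp (z ^ 2); linarith
    have h3 : 2 * |z| ≤ 1 + z ^ 2 := by nlinarith [sq_nonneg (|z| - 1), sq_abs z]
    have h4 : (0:ℝ) < 1 + z ^ 2 := by positivity
    rw [Real.norm_eq_abs, abs_mul, abs_neg, abs_of_nonneg (Real.exp_pos _).le, abs_mul]
    calc Real.exp (-z ^ 2) * (|2| * |z|) ≤ (1 + z ^ 2)⁻¹ * (2 * |z|) := by
          apply mul_le_mul h2 (by norm_num) (by positivity) (by positivity)
      _ ≤ (1 + z ^ 2)⁻¹ * (1 + z ^ 2) := by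
          apply mul_le_mul_of_nonneg_left h3 (by positivity)
      _ = 1 := by field_simp
  have hdiff : ∀ t ∈ Set.univ, DifferentiableAt ℝ (fun t : ℝ => Real.exp (-t ^ 2)) t := by
    intro t _
    exact (((differentiable_pow 2).neg t).exp)
  have := (convex_univ (𝕜 := ℝ)).norm_image_sub_le_of_norm_deriv_le
    (f := fun t : ℝ => Real.exp (-t ^ 2)) (fun t ht => hdiff t ht)
    (fun t _ => by simpa using key t) (Set.mem_univ y) (Set.mem_univ x)
  simpa [Real.norm_eq_abs] using this

lemma gauss_lip_T (T : ℝ) (hT : 0 ≤ T) (x y : ℝ) :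
    |Real.exp (-x ^ 2 * T ^ 2) - Real.exp (-y ^ 2 * T ^ 2)| ≤ T * |x - y| := by
  have h1 : -x ^ 2 * T ^ 2 = -(x * T) ^ 2 := by ring
  have h2 : -y ^ 2 * T ^ 2 = -(y * T) ^ 2 := by ring
  rw [h1, h2]
  calc |Real.exp (-(x * T) ^ 2) - Real.exp (-(y * T) ^ 2)| ≤ |x * T - y * T| :=
        gauss_lip (x * T) (y * T)
    _ = T * |x - y| := by rw [show x * T - y * T = T * (x - y) by ring, abs_mul,
        abs_of_nonneg hT]

theorem stmt1 (L M R : ℕ) (hL : 0 < L) (hM : 0 < M) (hR : 0 < R)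
    (Φ : Matrix (Fin L) (Fin M) ℂ) (Ψ : Matrix (Fin R) (Fin M) ℂ)
    (lam : Fin M → ℝ) (T : ℝ) (hT : 0 ≤ T) :
    ∀ θ θ' : ℝ,
      frob (Φ * Matrix.diagonal (fun m => (Real.exp (-(θ - lam m) ^ 2 * T ^ 2) : ℂ)) * Ψᴴ -
            Φ * Matrix.diagonal (fun m => (Real.exp (-(θ' - lam m) ^ 2 * T ^ 2) : ℂ)) * Ψᴴ) ≤
        T * |θ - θ'| * ∑ m, colNorm Φ m * colNorm Ψ m := by
  intro θ θ'
  set c : Fin M → ℝ := fun m => Real.exp (-(θ - lam m) ^ 2 * T ^ 2)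
  set c' : Fin M → ℝ := fun m => Real.exp (-(θ' - lam m) ^ 2 * T ^ 2)
  -- rank one pieces
  set E : Fin M → Matrix (Fin L) (Fin R) ℂ :=
    fun m => Matrix.of fun i j => Φ i m * star (Ψ j m) with hE
  have decomp :
      Φ * Matrix.diagonal (fun m => (c m : ℂ)) * Ψᴴ -
        Φ * Matrix.diagonal (fun m => (c' m : ℂ)) * Ψᴴ
      = ∑ m, ((c m : ℂ) - (c' m : ℂ)) • E m := by
    ext i j
    simp only [Matrix.sub_apply, Matrix.mul_apply, Matrix.diagonal_apply,
      Matrix.conjTranspose_apply, Matrix.sum_apply, Matrix.smul_apply, hE, Matrix.of_apply,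
      smul_eq_mul, Finset.sum_ite_eq, Finset.mem_univ, if_true]
    rw [← Finset.sum_sub_distrib]
    apply Finset.sum_congr rfl
    intro m _
    simp only [mul_ite, mul_zero, Finset.sum_ite_eq', Finset.mem_univ, if_true]
    ring
  have Enorm : ∀ m, ‖E m‖ = colNorm Φ m * colNorm Ψ m := by
    intro m
    rw [Matrix.frobenius_norm_def]
    simp only [hE, Matrix.of_apply, norm_mul, norm_star]
    rw [colNorm, colNorm, ← Real.sqrt_mul (by positivity), ← Real.sqrt_eq_rpow]
    congr 1
    rw [Finset.sum_mul_sum]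
    apply Finset.sum_congr rfl; intro i _
    apply Finset.sum_congr rfl; intro j _
    rw [show ((2:ℝ)) = ((2:ℕ):ℝ) by norm_num, Real.rpow_natCast, mul_pow]
  rw [frob_eq_norm, decomp]
  calc ‖∑ m, ((c m : ℂ) - (c' m : ℂ)) • E m‖
      ≤ ∑ m, ‖((c m : ℂ) - (c' m : ℂ)) • E m‖ := norm_sum_le _ _
    _ ≤ ∑ m, T * |θ - θ'| * (colNorm Φ m * colNorm Ψ m) := by
        apply Finset.sum_le_sum
        intro m _
        rw [norm_smul, Enorm m]
        apply mul_le_mul_of_nonneg_right _ (mul_nonneg (Real.sqrt_nonneg _) (Real.sqrt_nonneg _))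
        have : ‖((c m : ℂ) - (c' m : ℂ))‖ = |c m - c' m| := by
          rw [← Complex.ofReal_sub, Complex.norm_real, Real.norm_eq_abs]
        rw [this]
        have := gauss_lip_T T hT (θ - lam m) (θ' - lam m)
        simpa [c, c', sub_sub_sub_cancel_right] using this
    _ = T * |θ - θ'| * ∑ m, colNorm Φ m * colNorm Ψ m := by
        rw [Finset.mul_sum]
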